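/- arXiv:2309.16282 — 2 statements merged into one kernel-verified Lean document; each statement's English description precedes it below -/
import Mathlib

section
/- Correctness of AgEncID decryption: Let g be a generator of an additive cyclic group G of prime order p, α, γ, t ∈ ℤ_p, and define g_i = α^i • g for i ∈ {1,…,2n}, v = γ • g, d_i = γ • g_i. For a set S ⊆ {1,…,n}, let K_S = ∑_{j∈S} g_{n+1−j}, and for i ∈ S let b_{i,S} = ∑_{j∈S, j≠i} g_{n+1−j+i}. Given message m ∈ G_T, let c₁ = t•g, c₂ = t•(v + K_S), c₃ = m·ê(g_n, t•g₁). Then c₃ · ê(d_i + b_{i,S}, c₁) / ê(g_i, c₂) = m, for any bilinear map ê : G × G → G_T satisfying ê(g₁, g_n) = ê(g, g_{n+1}). -/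
theorem agEncID_correctness {p : ℕ} [Fact p.Prime]
    {G : Type*} [AddCommGroup G] [Module (ZMod p) G]
    {GT : Type*} [CommGroup GT]
    (e : G → G → GT)
    (hleft : ∀ g₁ g₂ g₃ : G, e (g₁ + g₂) g₃ = e g₁ g₃ * e g₂ g₃)
    (hright : ∀ g₁ g₂ g₃ : G, e g₁ (g₂ + g₃) = e g₁ g₂ * e g₁ g₃)
    (g : G) (hgen : ∀ x : G, ∃ c : ZMod p, x = c • g)
    (α γ t : ZMod p) (n : ℕ) (hn : 0 < n)
    (gi : ℕ → G) (hgi : ∀ k, gi k = (α ^ k) • g)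
    (v : G) (hv : v = γ • g)
    (d : ℕ → G) (hd : ∀ k, d k = γ • gi k)
    (S : Finset ℕ) (hS : S ⊆ Finset.Icc 1 n) (i : ℕ) (hi : i ∈ S)
    (KS : G) (hKS : KS = ∑ j ∈ S, gi (n + 1 - j))
    (b : G) (hb : b = ∑ j ∈ S.erase i, gi (n + 1 - j + i))
    (m : GT)
    (c₁ : G) (hc₁ : c₁ = t • g)
    (c₂ : G) (hc₂ : c₂ = t • (v + KS))
    (c₃ : GT) (hc₃ : c₃ = m * e (gi n) (t • gi 1))
    (hDHE : e (gi 1) (gi n) = e g (gi (n + 1))) :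
    c₃ * e (d i + b) c₁ / e (gi i) c₂ = m := by
  -- basic pairing lemmas
  have e0l : ∀ y, e 0 y = 1 := by
    intro y
    have := hleft 0 0 y
    simp only [add_zero] at this
    exact (right_eq_mul.mp this)
  have e0r : ∀ x, e x 0 = 1 := by
    intro x
    have := hright x 0 0
    simp only [add_zero] at this
    exact (right_eq_mul.mp this)
  have ensl : ∀ (k : ℕ) (x y : G), e (k • x) y = e x y ^ k := by
    intro k x y
    induction k with
    | zero => simpa using e0l y
    | succ k ih => rw [succ_nsmul, hleft, ih, pow_succ]
  have ensr : ∀ (k : ℕ) (x y : G), e x (k • y) = e x y ^ k := by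
    intro k x y
    induction k with
    | zero => simpa using e0r x
    | succ k ih => rw [succ_nsmul, hright, ih, pow_succ]
  have hcv : ∀ c : ZMod p, ∀ x : G, c • x = (c.val : ℕ) • x := by
    intro c x
    rw [← Nat.cast_smul_eq_nsmul (ZMod p), ZMod.natCast_val, ZMod.cast_id]
  have ezl : ∀ (c : ZMod p) (x y : G), e (c • x) y = e x y ^ c.val := by
    intro c x y; rw [hcv, ensl]
  have ezr : ∀ (c : ZMod p) (x y : G), e x (c • y) = e x y ^ c.val := by
    intro c x y; rw [hcv, ensr]
  have hup : ∀ x y : G, e x y ^ p = 1 := by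
    intro x y
    rw [← ensl]
    have hpx : (p : ℕ) • x = (0 : G) := by
      rw [← Nat.cast_smul_eq_nsmul (ZMod p), ZMod.natCast_self, zero_smul]
    rw [hpx, e0l]
  have hmodp : ∀ (x y : G) (a : ℕ), e x y ^ a = e x y ^ (a % p) := by
    intro x y a
    conv_lhs => rw [← Nat.div_add_mod a p]
    rw [pow_add, pow_mul, hup, one_pow, one_mul]
  have hmod : ∀ (x y : G) (a b : ℕ), ((a : ZMod p) = (b : ZMod p)) →
      e x y ^ a = e x y ^ b := by
    intro x y a b hab
    have : a % p = b % p := (ZMod.natCast_eq_natCast_iff a b p).mp hab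
    rw [hmodp x y a, hmodp x y b, this]
  have epair : ∀ a c : ZMod p, e (a • g) (c • g) = e g g ^ (a * c).val := by
    intro a c
    rw [ezl, ezr, ← pow_mul]
    exact hmod g g _ _ (by push_cast [ZMod.natCast_val, ZMod.cast_id]; ring)
  -- bounds on i
  have hib : 1 ≤ i ∧ i ≤ n := by
    have := hS hi; simpa [Finset.mem_Icc] using this
  -- scalar decompositions
  have hArg1 : d i + b = (γ * α ^ i + ∑ j ∈ S.erase i, α ^ (n + 1 - j + i)) • g := by
    rw [hd, hb, hgi, smul_smul, add_smul, Finset.sum_smul]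
    congr 1
    exact Finset.sum_congr rfl fun j _ => by rw [hgi]
  have hc₂' : c₂ = (t * (γ + ∑ j ∈ S, α ^ (n + 1 - j))) • g := by
    rw [hc₂, hv, hKS]
    rw [show (∑ j ∈ S, gi (n + 1 - j)) = (∑ j ∈ S, α ^ (n + 1 - j)) • g by
      rw [Finset.sum_smul]; exact Finset.sum_congr rfl fun j _ => by rw [hgi]]
    rw [← add_smul, smul_smul]
  -- scalar identity
  have hscal : (α ^ n * (t * α ^ 1) + (γ * α ^ i + ∑ j ∈ S.erase i, α ^ (n + 1 - j + i)) * t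
      : ZMod p) = α ^ i * (t * (γ + ∑ j ∈ S, α ^ (n + 1 - j))) := by
    have hsum : (∑ j ∈ S, α ^ (n + 1 - j) * α ^ i)
        = α ^ (n + 1) + ∑ j ∈ S.erase i, α ^ (n + 1 - j + i) := by
      rw [← Finset.add_sum_erase _ _ hi]
      congr 1
      · rw [← pow_add]
        congr 1
        omega
      · exact Finset.sum_congr rfl fun j hj => by rw [← pow_add]
    have expand : (α ^ i * (t * (γ + ∑ j ∈ S, α ^ (n + 1 - j))) : ZMod p)
        = t * γ * α ^ i + t * (∑ j ∈ S, α ^ (n + 1 - j) * α ^ i) := by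
      rw [← Finset.sum_mul]; ring
    rw [expand, hsum]; ring
  -- assemble
  rw [hc₃, hc₁, hArg1, hc₂', hgi n, hgi i, hgi 1, smul_smul, epair, epair, epair]
  have key : e g g ^ ((α ^ n * (t * α ^ 1)).val
        + ((γ * α ^ i + ∑ j ∈ S.erase i, α ^ (n + 1 - j + i)) * t).val)
      = e g g ^ ((α ^ i * (t * (γ + ∑ j ∈ S, α ^ (n + 1 - j)))).val) :=
    hmod g g _ _ (by push_cast [ZMod.natCast_val, ZMod.cast_id]; exact hscal)
  rw [mul_assoc, ← pow_add, key]
  exact mul_div_cancel_right m _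
end

section
/- With notation as in the AgEncID scheme, ê(d_i + b_{i,S}, c₁) / ê(g_i, c₂) = ê(g_{n+1}, t•g)⁻¹, where d_i = γ•g_i, b_{i,S} = ∑_{j∈S, j≠i} g_{n+1−j+i}, c₁ = t•g, c₂ = t•(γ•g + ∑_{j∈S} g_{n+1−j}), and g_k = α^k • g. -/
theorem agEncID_pairing_ratio
    {G : Type*} [AddCommGroup G]
    {GT : Type*} [CommGroup GT]
    (e : G → G → GT)
    (hleft : ∀ g₁ g₂ g₃ : G, e (g₁ + g₂) g₃ = e g₁ g₃ * e g₂ g₃)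
    (hright : ∀ g₁ g₂ g₃ : G, e g₁ (g₂ + g₃) = e g₁ g₂ * e g₁ g₃)
    (g : G) (α γ t : ℤ) (n : ℕ) (hn : 0 < n)
    (gi : ℕ → G) (hgi : ∀ k, gi k = (α ^ k) • g)
    (d : ℕ → G) (hd : ∀ k, d k = γ • gi k)
    (S : Finset ℕ) (hS : S ⊆ Finset.Icc 1 n) (i : ℕ) (hi : i ∈ S)
    (b : G) (hb : b = ∑ j ∈ S.erase i, gi (n + 1 - j + i))
    (c₁ : G) (hc₁ : c₁ = t • g)
    (c₂ : G) (hc₂ : c₂ = t • (γ • g + ∑ j ∈ S, gi (n + 1 - j))) :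
    e (d i + b) c₁ / e (gi i) c₂ = (e (gi (n + 1)) (t • g))⁻¹ := by
  obtain ⟨hi1, hin⟩ := Finset.mem_Icc.mp (hS hi)
  have hl : ∀ (m : ℤ) (x y : G), e (m • x) y = e x y ^ m := by
    intro m x y
    exact congrArg Additive.toMul
      (map_zsmul (AddMonoidHom.mk' (fun a => Additive.ofMul (e a y))
        (fun a b => hleft a b y)) m x)
  have hr : ∀ (m : ℤ) (x y : G), e x (m • y) = e x y ^ m := by
    intro m x y
    exact congrArg Additive.toMul
      (map_zsmul (AddMonoidHom.mk' (fun a => Additive.ofMul (e x a))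
        (fun a b => hright x a b)) m y)
  have hzero_l : ∀ y : G, e 0 y = 1 := by
    intro y
    have := hleft 0 0 y
    simpa using this.symm
  have hzero_r : ∀ x : G, e x 0 = 1 := by
    intro x
    have := hright x 0 0
    simpa using this.symm
  have hsuml : ∀ (s : Finset ℕ) (f : ℕ → G) (y : G),
      e (∑ j ∈ s, f j) y = ∏ j ∈ s, e (f j) y := by
    intro s f y
    induction s using Finset.cons_induction with
    | empty => simpa using hzero_l y
    | cons a s ha ih => rw [Finset.sum_cons, Finset.prod_cons, hleft, ih]
  have hsumr : ∀ (s : Finset ℕ) (x : G) (f : ℕ → G),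
      e x (∑ j ∈ s, f j) = ∏ j ∈ s, e x (f j) := by
    intro s x f
    induction s using Finset.cons_induction with
    | empty => simpa using hzero_r x
    | cons a s ha ih => rw [Finset.sum_cons, Finset.prod_cons, hright, ih]
  have key : ∀ (a c : ℤ), e (a • g) (c • g) = e g g ^ (a * c) := by
    intro a c
    rw [hl, hr, ← zpow_mul, mul_comm]
  set E := e g g with hE
  have hprod : ∀ (s : Finset ℕ) (f : ℕ → ℤ),
      ∏ j ∈ s, E ^ (f j) = E ^ (∑ j ∈ s, f j) := by
    intro s f
    induction s using Finset.cons_induction with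
    | empty => simp
    | cons a s ha ih => rw [Finset.prod_cons, Finset.sum_cons, ih, zpow_add]
  -- numerator
  have hnum : e (d i + b) c₁
      = E ^ (γ * α ^ i * t + ∑ j ∈ S.erase i, α ^ (n + 1 - j + i) * t) := by
    rw [hleft, hd, hgi, hc₁, smul_smul, key, hb, hsuml]
    have h2 : ∏ j ∈ S.erase i, e (gi (n + 1 - j + i)) (t • g)
        = E ^ (∑ j ∈ S.erase i, α ^ (n + 1 - j + i) * t) := by
      rw [← hprod]
      refine Finset.prod_congr rfl fun j _ => ?_
      rw [hgi, key]
    rw [h2, ← zpow_add]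
  -- denominator
  have hden : e (gi i) c₂
      = E ^ ((α ^ i * γ + ∑ j ∈ S, α ^ i * α ^ (n + 1 - j)) * t) := by
    rw [hc₂, hgi, hr, hright, hsumr, key]
    have : ∏ j ∈ S, e ((α ^ i) • g) (gi (n + 1 - j))
        = E ^ (∑ j ∈ S, α ^ i * α ^ (n + 1 - j)) := by
      rw [← hprod]
      refine Finset.prod_congr rfl fun j _ => ?_
      rw [hgi, key]
    rw [this, ← zpow_add, ← zpow_mul]
  have hrhs : e (gi (n + 1)) (t • g) = E ^ (α ^ (n + 1) * t) := by
    rw [hgi, key]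
  rw [hnum, hden, hrhs, ← zpow_neg, div_eq_iff_eq_mul, ← zpow_add]
  congr 1
  have hsplit : ∑ j ∈ S, α ^ i * α ^ (n + 1 - j)
      = (∑ j ∈ S.erase i, α ^ i * α ^ (n + 1 - j)) + α ^ i * α ^ (n + 1 - i) :=
    (Finset.sum_erase_add S _ hi).symm
  have hpow : α ^ i * α ^ (n + 1 - i) = α ^ (n + 1) := by
    rw [← pow_add]
    congr 1
    omega
  have hterm : ∀ j ∈ S.erase i, α ^ (n + 1 - j + i) * t = α ^ i * α ^ (n + 1 - j) * t := by
    intro j _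
    rw [pow_add]
    ring
  rw [Finset.sum_congr rfl hterm, hsplit, hpow]
  rw [← Finset.sum_mul, add_mul]
  ring
end
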